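/- arXiv:1402.5709 — 5 statements merged into one kernel-verified Lean document; each statement's English description precedes it below -/
import Mathlib

section
/- Let g, d, t be real numbers with |g| ≤ 1/2, |d| ≤ 1 and 0 ≤ t ≤ 1, and let A(g,d,t) be the 2×2 real matrix [[1+g, −d·t], [−d·t, (1+d²t²)/(1+g)]]. Then for every vector v ∈ ℝ², (2/11)‖v‖² ≤ vᵀ A(g,d,t) v ≤ (11/2)‖v‖². -/
set_option maxHeartbeats 1000000


open Matrix

theorem uniform_ellipticity_coefficient_matrix (g d t : ℝ)
    (hg : |g| ≤ 1 / 2) (hd : |d| ≤ 1) (ht0 : 0 ≤ t) (ht1 : t ≤ 1) :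
    ∀ v : EuclideanSpace ℝ (Fin 2),
      (2 / 11) * ‖v‖ ^ 2 ≤
        (WithLp.equiv 2 (Fin 2 → ℝ) v) ⬝ᵥ
          (!![1 + g, -(d * t); -(d * t), (1 + d ^ 2 * t ^ 2) / (1 + g)] :
              Matrix (Fin 2) (Fin 2) ℝ).mulVec (WithLp.equiv 2 (Fin 2 → ℝ) v) ∧
      (WithLp.equiv 2 (Fin 2 → ℝ) v) ⬝ᵥ
          (!![1 + g, -(d * t); -(d * t), (1 + d ^ 2 * t ^ 2) / (1 + g)] :
              Matrix (Fin 2) (Fin 2) ℝ).mulVec (WithLp.equiv 2 (Fin 2 → ℝ) v) ≤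
        (11 / 2) * ‖v‖ ^ 2 := by
  intro v
  have hg1 : -(1/2 : ℝ) ≤ g := (abs_le.mp hg).1
  have hg2 : g ≤ 1/2 := (abs_le.mp hg).2
  have ha0 : (0:ℝ) < 1 + g := by linarith
  have hd1 : -(1:ℝ) ≤ d := (abs_le.mp hd).1
  have hd2 : d ≤ 1 := (abs_le.mp hd).2
  have hdsq : d ^ 2 ≤ 1 := by nlinarith
  have htsq : t ^ 2 ≤ 1 := by nlinarith
  have hs : (d * t) ^ 2 ≤ 1 := by
    have h := mul_le_mul hdsq htsq (sq_nonneg t) zero_le_one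
    nlinarith [h]
  set x : ℝ := v 0 with hx
  set y : ℝ := v 1 with hy
  have hnorm : ‖v‖ ^ 2 = x ^ 2 + y ^ 2 := by
    rw [EuclideanSpace.norm_eq]
    rw [Real.sq_sqrt (by positivity)]
    simp [Fin.sum_univ_two, sq_abs, hx, hy]
  have hdot : (WithLp.equiv 2 (Fin 2 → ℝ) v) ⬝ᵥ
      (!![1 + g, -(d * t); -(d * t), (1 + d ^ 2 * t ^ 2) / (1 + g)] :
          Matrix (Fin 2) (Fin 2) ℝ).mulVec (WithLp.equiv 2 (Fin 2 → ℝ) v)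
      = (1 + g) * x ^ 2 - 2 * (d * t) * x * y
        + (1 + d ^ 2 * t ^ 2) / (1 + g) * y ^ 2 := by
    simp [dotProduct, Matrix.mulVec, Fin.sum_univ_two, Equiv.refl_apply, Matrix.vecHead, Matrix.vecTail, hx, hy]
    ring
  rw [hdot, hnorm]
  set w : ℝ := (1 + d ^ 2 * t ^ 2) / (1 + g) with hw
  have hwa : w * (1 + g) = 1 + (d * t) ^ 2 := by
    rw [hw, div_mul_cancel₀ _ ha0.ne']; ring
  have expand : ((1 + g) * x ^ 2 - 2 * (d * t) * x * y + w * y ^ 2) * (1 + g)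
      = (1 + g) ^ 2 * x ^ 2 - 2 * (d * t) * (1 + g) * x * y
        + (w * (1 + g)) * y ^ 2 := by ring
  constructor
  · rw [← mul_le_mul_iff_of_pos_right ha0, expand, hwa]
    have hc : (0:ℝ) ≤ 125 * (1 + g) - 22 * (1 + g) ^ 2 - 22 - 22 * (d * t) ^ 2 := by
      nlinarith [mul_nonneg (by linarith : (0:ℝ) ≤ (1 + g) - 1/2)
        (by linarith : (0:ℝ) ≤ 3/2 - (1 + g))]
    have hcy : (0:ℝ) ≤ (1 + g) *
        (125 * (1 + g) - 22 * (1 + g) ^ 2 - 22 - 22 * (d * t) ^ 2) * y ^ 2 :=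
      mul_nonneg (mul_nonneg ha0.le hc) (sq_nonneg y)
    nlinarith [sq_nonneg ((11 * (1 + g) ^ 2 - 2 * (1 + g)) * x - 11 * (1 + g) * (d * t) * y),
      hcy, mul_pos (by linarith : (0:ℝ) < 11 * (1 + g) - 2) ha0]
  · rw [← mul_le_mul_iff_of_pos_right ha0, expand, hwa]
    have hc : (0:ℝ) ≤ (1 + g) * (11 - 2 * (1 + g)) * (11 * (1 + g) - 2 - 2 * (d * t) ^ 2)
        - 4 * (1 + g) ^ 2 * (d * t) ^ 2 := by
      nlinarith [mul_nonneg (mul_nonneg ha0.le (by linarith : (0:ℝ) ≤ 11 - 2 * (1 + g)))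
          (by nlinarith : (0:ℝ) ≤ 11 * (1 + g) - 2 - 2 * (d * t) ^ 2),
        mul_nonneg ha0.le (sub_nonneg.mpr hs),
        mul_nonneg (mul_nonneg ha0.le ha0.le) (sub_nonneg.mpr hs),
        sq_nonneg (d * t)]
    have hcy : (0:ℝ) ≤ ((1 + g) * (11 - 2 * (1 + g)) * (11 * (1 + g) - 2 - 2 * (d * t) ^ 2)
        - 4 * (1 + g) ^ 2 * (d * t) ^ 2) * y ^ 2 := mul_nonneg hc (sq_nonneg y)
    nlinarith [sq_nonneg ((1 + g) * (11 - 2 * (1 + g)) * x + 2 * (1 + g) * (d * t) * y),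
      hcy, mul_pos ha0 (by linarith : (0:ℝ) < 11 - 2 * (1 + g))]
end

section
/- Let f ∈ L¹((0,1)) (Lebesgue measure) satisfy ∫₀¹ f(x) dx = 0. Then ‖f‖_{L¹(0,1)} ≤ 2·sup{ ∫₀¹ f(x) φ(x) dx : φ ∈ L^∞(0,1), ∫₀¹ φ(x) dx = 0, ‖φ‖_{L^∞(0,1)} ≤ 1 }. -/
open MeasureTheory Set
open scoped ENNReal

lemma measurable_real_sign : Measurable Real.sign := by
  unfold Real.sign
  exact Measurable.ite (measurableSet_lt measurable_id measurable_const)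
    measurable_const
    (Measurable.ite (measurableSet_lt measurable_const measurable_id)
      measurable_const measurable_const)

lemma abs_real_sign_le_one (r : ℝ) : |Real.sign r| ≤ 1 := by
  rcases Real.sign_apply_eq r with h | h | h <;> rw [h] <;> norm_num

lemma mul_real_sign_eq_abs (r : ℝ) : r * Real.sign r = |r| := by
  rcases lt_trichotomy r 0 with h | h | h
  · rw [Real.sign_of_neg h, abs_of_neg h]; ring
  · simp [h, Real.sign_zero]
  · rw [Real.sign_of_pos h, abs_of_pos h]; ring

set_option maxHeartbeats 1000000 in
theorem l1_norm_le_two_mul_sup_of_mean_zero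
    (f : ℝ → ℝ)
    (hf : Integrable f (volume.restrict (Ioo (0:ℝ) 1)))
    (h0 : ∫ x, f x ∂(volume.restrict (Ioo (0:ℝ) 1)) = 0) :
    (eLpNorm f 1 (volume.restrict (Ioo (0:ℝ) 1))).toReal ≤
      2 * sSup {r : ℝ | ∃ φ : ℝ → ℝ,
        MemLp φ ⊤ (volume.restrict (Ioo (0:ℝ) 1)) ∧
        (∫ x, φ x ∂(volume.restrict (Ioo (0:ℝ) 1))) = 0 ∧
        eLpNorm φ ⊤ (volume.restrict (Ioo (0:ℝ) 1)) ≤ 1 ∧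
        r = ∫ x, f x * φ x ∂(volume.restrict (Ioo (0:ℝ) 1))} := by
  set μ := volume.restrict (Ioo (0:ℝ) 1) with hμdef
  have hμuniv : μ Set.univ = 1 := by
    rw [hμdef, Measure.restrict_apply_univ, Real.volume_Ioo]
    simp
  have hfinite : IsFiniteMeasure μ := ⟨by rw [hμuniv]; exact ENNReal.one_lt_top⟩
  -- the sign function of f
  set g : ℝ → ℝ := fun x => Real.sign (f x) with hgdef
  have hg_meas : AEStronglyMeasurable g μ :=
    (measurable_real_sign.comp_aemeasurable hf.aemeasurable).aestronglyMeasurable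
  have hg_bd : ∀ x, ‖g x‖ ≤ 1 := fun x => abs_real_sign_le_one (f x)
  have hg_int : Integrable g μ := by
    refine ⟨hg_meas, ?_⟩
    exact HasFiniteIntegral.of_bounded (C := 1) (Filter.Eventually.of_forall hg_bd)
  set c : ℝ := ∫ x, g x ∂μ with hcdef
  have hc_bd : |c| ≤ 1 := by
    have := norm_integral_le_of_norm_le_const (μ := μ) (f := g) (C := 1)
      (Filter.Eventually.of_forall hg_bd)
    simpa [Measure.real, hμuniv] using this
  -- the test function
  set φ : ℝ → ℝ := fun x => (g x - c) / 2 with hφdef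
  have hφ_bd : ∀ x, ‖φ x‖ ≤ 1 := by
    intro x
    have h1 : |g x - c| ≤ 2 := by
      calc |g x - c| ≤ |g x| + |c| := abs_sub _ _
        _ ≤ 1 + 1 := add_le_add (hg_bd x) hc_bd
        _ = 2 := by norm_num
    have : ‖φ x‖ = |g x - c| / 2 := by
      rw [hφdef]; simp [abs_div]
    rw [this]; linarith
  have hφ_meas : AEStronglyMeasurable φ μ := by
    have := (hg_meas.sub (aestronglyMeasurable_const (b := c))).mul
      (aestronglyMeasurable_const (b := (2:ℝ)⁻¹))
    simpa [hφdef, div_eq_mul_inv, Pi.mul_def, Pi.sub_def] using this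
  have hφ_mem : MemLp φ ⊤ μ :=
    memLp_top_of_bound hφ_meas 1 (Filter.Eventually.of_forall hφ_bd)
  have hφ_norm : eLpNorm φ ⊤ μ ≤ 1 := by
    have := eLpNormEssSup_le_of_ae_bound (μ := μ) (f := φ) (C := 1)
      (Filter.Eventually.of_forall hφ_bd)
    simpa [eLpNorm_exponent_top] using this
  have hφ_int : Integrable φ μ := (hg_int.sub (integrable_const c)).div_const 2
  have hφ_mean : ∫ x, φ x ∂μ = 0 := by
    rw [hφdef]
    simp only
    rw [integral_div, integral_sub hg_int (integrable_const c), integral_const, Measure.real, hμuniv]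
    simp [← hcdef]
  -- the pairing value
  have hfg_int : Integrable (fun x => f x * g x) μ := by
    have h1 : Integrable (fun x => g x * f x) μ :=
      Integrable.bdd_mul (c := 1) hf hg_meas (Filter.Eventually.of_forall hg_bd)
    exact h1.congr (Filter.Eventually.of_forall fun x => mul_comm _ _)
  have hfg : ∫ x, f x * g x ∂μ = ∫ x, |f x| ∂μ := by
    apply integral_congr_ae
    exact Filter.Eventually.of_forall fun x => mul_real_sign_eq_abs (f x)
  have hpair : ∫ x, f x * φ x ∂μ = (∫ x, |f x| ∂μ) / 2 := by
    have heq : (fun x => f x * φ x) = fun x => (f x * g x - c * f x) / 2 := by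
      funext x; rw [hφdef]; ring
    rw [heq]
    rw [integral_div, integral_sub hfg_int (hf.const_mul c), integral_const_mul, h0, hfg]
    ring
  -- the L¹ norm as an integral
  have hL1 : (eLpNorm f 1 μ).toReal = ∫ x, |f x| ∂μ := by
    have h1 : ∫ x, ‖f x‖ ∂μ = (∫⁻ x, ‖f x‖ₑ ∂μ).toReal :=
      integral_norm_eq_lintegral_enorm hf.aestronglyMeasurable
    rw [eLpNorm_one_eq_lintegral_enorm, ← h1]
    simp [Real.norm_eq_abs]
  -- the set is bounded above
  set S := {r : ℝ | ∃ φ : ℝ → ℝ, MemLp φ ⊤ μ ∧ (∫ x, φ x ∂μ) = 0 ∧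
      eLpNorm φ ⊤ μ ≤ 1 ∧ r = ∫ x, f x * φ x ∂μ} with hSdef
  have hS_bdd : BddAbove S := by
    refine ⟨∫ x, |f x| ∂μ, ?_⟩
    rintro r ⟨ψ, hψ_mem, -, hψ_norm, rfl⟩
    have hψ_ae : ∀ᵐ x ∂μ, ‖ψ x‖ ≤ 1 := by
      have h1 : ∀ᵐ x ∂μ, (‖ψ x‖₊ : ℝ≥0∞) ≤ eLpNormEssSup ψ μ := ae_le_eLpNormEssSup
      filter_upwards [h1] with x hx
      have h2 : (‖ψ x‖₊ : ℝ≥0∞) ≤ 1 := hx.trans (by rwa [← eLpNorm_exponent_top])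
      have h3 : ‖ψ x‖₊ ≤ 1 := by exact_mod_cast h2
      exact_mod_cast h3
    calc ∫ x, f x * ψ x ∂μ ≤ ‖∫ x, f x * ψ x ∂μ‖ := le_abs_self _
      _ ≤ ∫ x, ‖f x * ψ x‖ ∂μ := norm_integral_le_integral_norm _
      _ ≤ ∫ x, |f x| ∂μ := by
          apply integral_mono_of_nonneg
          · exact Filter.Eventually.of_forall fun x => norm_nonneg _
          · exact hf.abs
          · filter_upwards [hψ_ae] with x hx
            calc ‖f x * ψ x‖ = |f x| * ‖ψ x‖ := by rw [norm_mul]; rfl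
              _ ≤ |f x| * 1 := mul_le_mul_of_nonneg_left hx (abs_nonneg _)
              _ = |f x| := mul_one _
    -- membership of our φ
  have hmem : (∫ x, |f x| ∂μ) / 2 ∈ S := ⟨φ, hφ_mem, hφ_mean, hφ_norm, hpair.symm⟩
  have hle : (∫ x, |f x| ∂μ) / 2 ≤ sSup S := le_csSup hS_bdd hmem
  rw [hL1]
  linarith
end

section
/- Let H be a real Hilbert space, λ > 0, K ⊆ H a convex set, ū ∈ K, and J : H → ℝ twice continuously (Fréchet) differentiable. Assume (i) J′(ū)(u − ū) ≥ 0 for all u ∈ K, and (ii) J″(ū)(h,h) ≥ (λ/2)‖h‖² for every h of the form h = t(u − ū) with u ∈ K and t ≥ 0. Then there exists ε > 0 such that for all u ∈ K with ‖u − ū‖ ≤ ε one has J(u) ≥ J(ū) + (λ/8)‖u − ū‖². -/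
theorem local_quadratic_growth_of_second_order_condition
    {H : Type*} [NormedAddCommGroup H] [InnerProductSpace ℝ H] [CompleteSpace H]
    (lam : ℝ) (hlam : 0 < lam) (K : Set H) (hK : Convex ℝ K)
    (ubar : H) (hubar : ubar ∈ K)
    (J : H → ℝ) (hJ : ContDiff ℝ 2 J)
    (hfirst : ∀ u ∈ K, fderiv ℝ J ubar (u - ubar) ≥ 0)
    (hsecond : ∀ u ∈ K, ∀ t : ℝ, 0 ≤ t →
      (fderiv ℝ (fderiv ℝ J) ubar (t • (u - ubar))) (t • (u - ubar)) ≥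
        (lam / 2) * ‖t • (u - ubar)‖ ^ 2) :
    ∃ ε > 0, ∀ u ∈ K, ‖u - ubar‖ ≤ ε →
      J u ≥ J ubar + (lam / 8) * ‖u - ubar‖ ^ 2 := by
  have hF1 : ContDiff ℝ 1 (fderiv ℝ J) := hJ.fderiv_right (by norm_num)
  have hFdiff : Differentiable ℝ (fderiv ℝ J) := hF1.differentiable one_ne_zero
  have hAcont : Continuous (fderiv ℝ (fderiv ℝ J)) := hF1.continuous_fderiv one_ne_zero
  have hJdiff : Differentiable ℝ J := hJ.differentiable (by norm_num)
  obtain ⟨δ, hδ, hδ'⟩ := (Metric.continuousAt_iff (f := fderiv ℝ (fderiv ℝ J)) (a := ubar)).mp hAcont.continuousAt (lam / 4)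
    (by positivity)
  refine ⟨δ / 2, by positivity, ?_⟩
  intro u hu hnorm
  set A := fderiv ℝ (fderiv ℝ J) with hAdef
  set h := u - ubar with hh
  set γ : ℝ → H := fun t => ubar + t • h with hγ
  have hγd : ∀ t : ℝ, HasDerivAt γ h t := by
    intro t
    have := ((hasDerivAt_id t).smul_const h).const_add ubar
    simpa [hγ] using this
  set D1 : ℝ → ℝ := fun t => fderiv ℝ J (γ t) h with hD1
  set D2 : ℝ → ℝ := fun t => (A (γ t) h) h with hD2
  have hg : ∀ t : ℝ, HasDerivAt (fun s => J (γ s)) (D1 t) t := fun t =>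
    (hJdiff (γ t)).hasFDerivAt.comp_hasDerivAt t (hγd t)
  have hev : ∀ t : ℝ, HasDerivAt D1 (D2 t) t := by
    intro t
    have h1 : HasFDerivAt (fderiv ℝ J) (A (γ t)) (γ t) := (hFdiff (γ t)).hasFDerivAt
    have h2 : HasFDerivAt (fun v => fderiv ℝ J v h)
        ((ContinuousLinearMap.apply ℝ ℝ h).comp (A (γ t))) (γ t) :=
      (ContinuousLinearMap.apply ℝ ℝ h).hasFDerivAt.comp (γ t) h1
    have := h2.comp_hasDerivAt t (hγd t)
    exact this
  set c : ℝ := lam / 4 * ‖h‖ ^ 2 with hc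
  have hcnn : 0 ≤ c := by positivity
  have hbound : ∀ t ∈ Set.Icc (0 : ℝ) 1, c ≤ D2 t := by
    intro t ht
    have hA0 : lam / 2 * ‖h‖ ^ 2 ≤ (A ubar h) h := by
      have := hsecond u hu 1 zero_le_one
      simpa [hh] using this
    have hdist : dist (γ t) ubar < δ := by
      have h1 : γ t - ubar = t • h := by simp [hγ]
      rw [dist_eq_norm, h1, norm_smul]
      have : |t| ≤ 1 := abs_le.mpr ⟨by linarith [ht.1], ht.2⟩
      calc |t| * ‖h‖ ≤ 1 * (δ / 2) :=
            mul_le_mul this hnorm (norm_nonneg _) zero_le_one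
        _ < δ := by linarith
    have hAd : ‖A (γ t) - A ubar‖ < lam / 4 := by
      have := hδ' hdist
      exact lt_of_eq_of_lt (dist_eq_norm (A (γ t)) (A ubar)).symm this
    have key : |((A (γ t) - A ubar) h) h| ≤ lam / 4 * ‖h‖ ^ 2 := by
      have h1 : ‖((A (γ t) - A ubar) h) h‖ ≤ ‖(A (γ t) - A ubar) h‖ * ‖h‖ :=
        ((A (γ t) - A ubar) h).le_opNorm h
      have h2 : ‖(A (γ t) - A ubar) h‖ ≤ ‖A (γ t) - A ubar‖ * ‖h‖ :=
        (A (γ t) - A ubar).le_opNorm h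
      have h3 : ‖(A (γ t) - A ubar) h‖ * ‖h‖ ≤ (lam / 4 * ‖h‖) * ‖h‖ := by
        apply mul_le_mul_of_nonneg_right _ (norm_nonneg _)
        calc ‖(A (γ t) - A ubar) h‖ ≤ ‖A (γ t) - A ubar‖ * ‖h‖ := h2
          _ ≤ lam / 4 * ‖h‖ :=
              mul_le_mul_of_nonneg_right hAd.le (norm_nonneg _)
      calc |((A (γ t) - A ubar) h) h| = ‖((A (γ t) - A ubar) h) h‖ := rfl
        _ ≤ (lam / 4 * ‖h‖) * ‖h‖ := h1.trans h3
        _ = lam / 4 * ‖h‖ ^ 2 := by ring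
    have hsplit : D2 t = (A ubar h) h + ((A (γ t) - A ubar) h) h := by
      simp [hD2, ContinuousLinearMap.sub_apply]
    have := abs_le.mp key
    rw [hsplit, hc]
    linarith [this.1]
  -- ψ t = D1 t - D1 0 - c * t is monotone on [0,1]
  set ψ : ℝ → ℝ := fun t => D1 t - D1 0 - c * t with hψ
  have hψd : ∀ t : ℝ, HasDerivAt ψ (D2 t - c) t := by
    intro t
    have h1 : HasDerivAt (fun t : ℝ => c * t) c t := by
      simpa using (hasDerivAt_id t).const_mul c
    exact ((hev t).sub_const (D1 0)).sub h1
  have hψdiff : Differentiable ℝ ψ := fun t => (hψd t).differentiableAt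
  have hψmono : MonotoneOn ψ (Set.Icc (0 : ℝ) 1) := by
    apply monotoneOn_of_deriv_nonneg (convex_Icc 0 1)
      (hψdiff.continuous.continuousOn)
      (fun t _ => (hψd t).differentiableAt.differentiableWithinAt)
    intro t ht
    rw [interior_Icc] at ht
    rw [(hψd t).deriv]
    have := hbound t ⟨ht.1.le, ht.2.le⟩
    linarith
  have hψnonneg : ∀ t ∈ Set.Icc (0 : ℝ) 1, 0 ≤ ψ t := by
    intro t ht
    have := hψmono (Set.left_mem_Icc.mpr zero_le_one) ht ht.1
    simpa [hψ] using this
  -- φ t = J (γ t) - D1 0 * t - (c/2) * t^2 is monotone on [0,1]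
  set φ : ℝ → ℝ := fun t => J (γ t) - D1 0 * t - c / 2 * t ^ 2 with hφ
  have hφd : ∀ t : ℝ, HasDerivAt φ (ψ t) t := by
    intro t
    have h1 : HasDerivAt (fun t : ℝ => D1 0 * t) (D1 0) t := by
      simpa using (hasDerivAt_id t).const_mul (D1 0)
    have h2 : HasDerivAt (fun t : ℝ => c / 2 * t ^ 2) (c / 2 * (2 * t ^ 1)) t :=
      (hasDerivAt_pow 2 t).const_mul (c / 2)
    have := ((hg t).sub h1).sub h2
    have heq : D1 t - D1 0 - c / 2 * (2 * t ^ 1) = ψ t := by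
      simp [hψ]; ring
    rwa [heq] at this
  have hφdiff : Differentiable ℝ φ := fun t => (hφd t).differentiableAt
  have hφmono : MonotoneOn φ (Set.Icc (0 : ℝ) 1) := by
    apply monotoneOn_of_deriv_nonneg (convex_Icc 0 1)
      (hφdiff.continuous.continuousOn)
      (fun t _ => (hφd t).differentiableAt.differentiableWithinAt)
    intro t ht
    rw [interior_Icc] at ht
    rw [(hφd t).deriv]
    exact hψnonneg t ⟨ht.1.le, ht.2.le⟩
  have hkey := hφmono (Set.left_mem_Icc.mpr zero_le_one)
    (Set.right_mem_Icc.mpr zero_le_one) zero_le_one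
  have hγ0 : γ 0 = ubar := by simp [hγ]
  have hγ1 : γ 1 = u := by simp [hγ, hh]
  have hD10 : 0 ≤ D1 0 := by
    have := hfirst u hu
    simpa [hD1, hγ0, hh] using this
  have : J ubar ≤ J u - D1 0 - c / 2 := by
    have := hkey
    simp only [hφ, hγ0, hγ1] at this
    nlinarith
  have hc8 : c / 2 = lam / 8 * ‖h‖ ^ 2 := by rw [hc]; ring
  rw [hc8] at this
  simp only [hh] at this ⊢
  linarith
end

section
/- Let H be a real Hilbert space, λ > 0, K ⊆ H a convex set, ū ∈ K, and J : H → ℝ twice continuously (Fréchet) differentiable. Assume J″(ū)(h,h) ≥ (λ/2)‖h‖² for every h of the form h = t(u − ū) with u ∈ K and t ≥ 0. Then there exists ε > 0 such that for all u ∈ K with ‖u − ū‖ ≤ ε one has (J′(u) − J′(ū))(u − ū) ≥ (λ/4)‖u − ū‖². -/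
theorem local_convexity_of_second_order_condition
    {H : Type*} [NormedAddCommGroup H] [InnerProductSpace ℝ H] [CompleteSpace H]
    (lam : ℝ) (hlam : 0 < lam) (K : Set H) (hK : Convex ℝ K)
    (ubar : H) (hubar : ubar ∈ K)
    (J : H → ℝ) (hJ : ContDiff ℝ 2 J)
    (hsecond : ∀ u ∈ K, ∀ t : ℝ, 0 ≤ t →
      (fderiv ℝ (fderiv ℝ J) ubar (t • (u - ubar))) (t • (u - ubar)) ≥
        (lam / 2) * ‖t • (u - ubar)‖ ^ 2) :
    ∃ ε > 0, ∀ u ∈ K, ‖u - ubar‖ ≤ ε →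
      (fderiv ℝ J u - fderiv ℝ J ubar) (u - ubar) ≥
        (lam / 4) * ‖u - ubar‖ ^ 2 := by
  set f'' := fderiv ℝ (fderiv ℝ J) with hf''
  have hJ1 : ContDiff ℝ 1 (fderiv ℝ J) := hJ.fderiv_right (by norm_num)
  have hdiff : Differentiable ℝ (fderiv ℝ J) := hJ1.differentiable one_ne_zero
  have hcont : Continuous f'' := hJ1.continuous_fderiv one_ne_zero
  have hq : 0 < lam / 4 := by linarith
  obtain ⟨ε, hε, hball⟩ := (Metric.continuousAt_iff (f := f'') (a := ubar)).mp hcont.continuousAt (lam / 4) hq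
  refine ⟨ε / 2, by linarith, fun u hu hdist => ?_⟩
  -- second order condition at t = 1
  have h2 : (f'' ubar (u - ubar)) (u - ubar) ≥ (lam / 2) * ‖u - ubar‖ ^ 2 := by
    have := hsecond u hu 1 zero_le_one
    simpa using this
  -- mean value estimate for ψ x = fderiv J x - f'' ubar (x - ubar)
  set ψ : H → (H →L[ℝ] ℝ) := fun x => fderiv ℝ J x - f'' ubar (x - ubar) with hψ
  have hderiv : ∀ x ∈ Metric.closedBall ubar (ε / 2),
      HasFDerivWithinAt ψ (f'' x - f'' ubar) (Metric.closedBall ubar (ε / 2)) x := by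
    intro x hx
    have h1 : HasFDerivAt (fun x => fderiv ℝ J x) (f'' x) x :=
      (hdiff x).hasFDerivAt
    have h2 : HasFDerivAt (fun x : H => f'' ubar (x - ubar)) (f'' ubar) x := by
      have : HasFDerivAt (fun x : H => x - ubar) (ContinuousLinearMap.id ℝ H) x :=
        (hasFDerivAt_id x).sub_const ubar
      exact (f'' ubar).hasFDerivAt.comp x this
    exact (h1.sub h2).hasFDerivWithinAt
  have hbound : ∀ x ∈ Metric.closedBall ubar (ε / 2), ‖f'' x - f'' ubar‖ ≤ lam / 4 := by
    intro x hx
    rcases eq_or_ne x ubar with rfl | hne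
    · exact le_of_eq_of_le ((congrArg norm (sub_self (f'' _))).trans ContinuousLinearMap.opNorm_zero) hq.le
    · have hxd : dist x ubar < ε := lt_of_le_of_lt (Metric.mem_closedBall.mp hx) (by linarith)
      exact le_of_lt (lt_of_eq_of_lt (dist_eq_norm (f'' x) (f'' ubar)).symm (hball hxd))
  have hmv := (convex_closedBall ubar (ε / 2)).norm_image_sub_le_of_norm_hasFDerivWithin_le
    hderiv hbound (Metric.mem_closedBall_self (by linarith))
    (show u ∈ Metric.closedBall ubar (ε / 2) by
      simpa [Metric.mem_closedBall, dist_eq_norm] using hdist)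
  -- ‖ψ u - ψ ubar‖ ≤ (lam/4) ‖u - ubar‖
  have hψdiff : ψ u - ψ ubar = fderiv ℝ J u - fderiv ℝ J ubar - f'' ubar (u - ubar) := by
    simp [hψ]; abel
  have hnorm : ‖fderiv ℝ J u - fderiv ℝ J ubar - f'' ubar (u - ubar)‖ ≤
      (lam / 4) * ‖u - ubar‖ := by
    rw [← hψdiff]; simpa using hmv
  have happ : |(fderiv ℝ J u - fderiv ℝ J ubar - f'' ubar (u - ubar)) (u - ubar)| ≤
      (lam / 4) * ‖u - ubar‖ * ‖u - ubar‖ := by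
    calc |(fderiv ℝ J u - fderiv ℝ J ubar - f'' ubar (u - ubar)) (u - ubar)|
        ≤ ‖fderiv ℝ J u - fderiv ℝ J ubar - f'' ubar (u - ubar)‖ * ‖u - ubar‖ := by
          simpa using (fderiv ℝ J u - fderiv ℝ J ubar - f'' ubar (u - ubar)).le_opNorm (u - ubar)
      _ ≤ (lam / 4) * ‖u - ubar‖ * ‖u - ubar‖ :=
          mul_le_mul_of_nonneg_right hnorm (norm_nonneg _)
  have hlo : (fderiv ℝ J u - fderiv ℝ J ubar - f'' ubar (u - ubar)) (u - ubar) ≥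
      -((lam / 4) * ‖u - ubar‖ * ‖u - ubar‖) := neg_le_of_abs_le happ
  have hsplit : (fderiv ℝ J u - fderiv ℝ J ubar) (u - ubar) =
      (fderiv ℝ J u - fderiv ℝ J ubar - f'' ubar (u - ubar)) (u - ubar) +
      (f'' ubar (u - ubar)) (u - ubar) := by
    simp
  have hsq : (lam / 4) * ‖u - ubar‖ * ‖u - ubar‖ = (lam / 4) * ‖u - ubar‖ ^ 2 := by ring
  rw [ge_iff_le, hsplit]
  linarith [hlo, h2, hsq]
end

section
/- Let H be a real Hilbert space, V ⊆ H a complete (closed) linear subspace with orthogonal projection P : H → V, K ⊆ H a convex set, and λ > 0. Let ū ∈ K, Ū ∈ K ∩ V, and s̄, s_U, S_U ∈ H satisfy: (i) ⟨λū + s̄, u − ū⟩ ≥ 0 for all u ∈ K; (ii) ⟨λŪ + S_U, U − Ū⟩ ≥ 0 for all U ∈ K ∩ V; (iii) λŪ + S_U ∈ V; (iv) P(ū) ∈ K; and (v) ⟨(λŪ + s_U) − (λū + s̄), Ū − ū⟩ ≥ (λ/4)‖Ū − ū‖². Then ‖ū − Ū‖ ≤ (4/λ)‖s_U − S_U‖.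 -/
open scoped RealInnerProductSpace

theorem apriori_error_estimate_optimal_control
    {H : Type*} [NormedAddCommGroup H] [InnerProductSpace ℝ H] [CompleteSpace H]
    (V : Submodule ℝ H) [CompleteSpace V]
    (K : Set H) (hK : Convex ℝ K)
    (lam : ℝ) (hlam : 0 < lam)
    (ubar Ubar sbar sU SU : H)
    (hubar : ubar ∈ K) (hUbarK : Ubar ∈ K) (hUbarV : Ubar ∈ V)
    (hcont : ∀ u ∈ K, ⟪lam • ubar + sbar, u - ubar⟫ ≥ 0)
    (hdisc : ∀ U : H, U ∈ K → U ∈ V → ⟪lam • Ubar + SU, U - Ubar⟫ ≥ 0)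
    (hgrad : lam • Ubar + SU ∈ V)
    (hproj : ((Submodule.orthogonalProjection V ubar : V) : H) ∈ K)
    (hconv : ⟪(lam • Ubar + sU) - (lam • ubar + sbar), Ubar - ubar⟫ ≥
      (lam / 4) * ‖Ubar - ubar‖ ^ 2) :
    ‖ubar - Ubar‖ ≤ (4 / lam) * ‖sU - SU‖ := by
  set d := Ubar - ubar with hd
  set g := lam • Ubar + SU with hg
  -- (i) with u = Ubar
  have h1 : ⟪lam • ubar + sbar, d⟫ ≥ 0 := hcont Ubar hUbarK
  -- (ii) with U = P ubar
  have h2 : ⟪g, ((Submodule.orthogonalProjection V ubar : V) : H) - Ubar⟫ ≥ 0 :=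
    hdisc _ hproj (Submodule.orthogonalProjection V ubar).2
  -- orthogonality: ⟪g, P ubar - ubar⟫ = 0
  have horth : ⟪g, ((Submodule.orthogonalProjection V ubar : V) : H) - ubar⟫ = 0 := by
    have hmem : ((Submodule.orthogonalProjection V ubar : V) : H) - ubar ∈ Vᗮ := by
      have := Submodule.sub_starProjection_mem_orthogonal (K := V) ubar
      have : -(ubar - ((Submodule.orthogonalProjection V ubar : V) : H)) ∈ Vᗮ := Vᗮ.neg_mem this
      simpa [neg_sub] using this
    exact (Submodule.mem_orthogonal V _).mp hmem g hgrad
  -- hence ⟪g, -d⟫ ≥ 0, i.e. ⟪g, d⟫ ≤ 0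
  have h3 : ⟪g, d⟫ ≤ 0 := by
    have hsplit : ⟪g, ((Submodule.orthogonalProjection V ubar : V) : H) - Ubar⟫ =
        ⟪g, ((Submodule.orthogonalProjection V ubar : V) : H) - ubar⟫ + ⟪g, ubar - Ubar⟫ := by
      rw [← inner_add_right]; congr 1; abel
    have : ⟪g, ubar - Ubar⟫ ≥ 0 := by
      have := h2
      rw [hsplit, horth, zero_add] at this
      exact this
    have hneg : ⟪g, d⟫ = -⟪g, ubar - Ubar⟫ := by
      rw [hd, ← inner_neg_right, neg_sub]
    linarith [hneg ▸ neg_nonpos_of_nonneg this]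
  -- key inequality
  have hkey : (lam / 4) * ‖d‖ ^ 2 ≤ ⟪sU - SU, d⟫ := by
    have hexp : ⟪sU - SU, d⟫ =
        ⟪(lam • Ubar + sU) - (lam • ubar + sbar), d⟫ - ⟪g, d⟫ + ⟪lam • ubar + sbar, d⟫ := by
      rw [hg, ← inner_sub_left, ← inner_add_left]
      congr 1
      abel
    rw [hexp]
    linarith [hconv]
  have hcs : ⟪sU - SU, d⟫ ≤ ‖sU - SU‖ * ‖d‖ := real_inner_le_norm _ _
  have hnd : ‖ubar - Ubar‖ = ‖d‖ := by rw [hd, norm_sub_rev]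
  rw [hnd]
  rcases eq_or_lt_of_le (norm_nonneg d) with h0 | h0
  · rw [← h0]
    positivity
  · have : (lam / 4) * ‖d‖ ^ 2 ≤ ‖sU - SU‖ * ‖d‖ := le_trans hkey hcs
    rw [sq] at this
    have h4 : (lam / 4) * ‖d‖ ≤ ‖sU - SU‖ := by
      nlinarith
    rw [div_mul_eq_mul_div, le_div_iff₀ hlam]
    nlinarith
end
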